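/- Let A_h > A_ℓ > 0, φ > 0, 0 < p < 1, and let c be a real number satisfying φ/(2A_h) ≤ c < min{φ/(2·Ā(p)), λ(p)}. Then p·φ + (1−p)·√(c·φ·A_ℓ/2) > √(c·φ·Ā(p)/2); that is, the fully revealing signaling policy gives player A a strictly higher payoff than the no-signaling benchmark. -/

import Mathlib

set_option maxHeartbeats 1600000 in
/-- If φ/(2A_h) ≤ c < min{φ/(2Ā(p)), λ(p)}, full revelation strictly beats
the no-signaling benchmark. -/
theorem stmt_7 (Ah Al φ p c : ℝ) (hAl : 0 < Al) (hAh : Al < Ah) (hφ : 0 < φ)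
    (hp0 : 0 < p) (hp1 : p < 1)
    (hc_lb : φ / (2 * Ah) ≤ c)
    (hc_ub : c < min (φ / (2 * (p * Ah + (1 - p) * Al)))
      ((φ / (2 * Ah ^ 2)) *
        (Real.sqrt ((1 - p) * Al) + Real.sqrt (p * Ah + (1 - p) * Al)) ^ 2)) :
    Real.sqrt (c * φ * (p * Ah + (1 - p) * Al) / 2)
      < p * φ + (1 - p) * Real.sqrt (c * φ * Al / 2) := by
  obtain ⟨hc1, hc2⟩ := lt_min_iff.mp hc_ub
  have hAh0 : (0:ℝ) < Ah := hAl.trans hAh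
  have hA : (0:ℝ) < p * Ah + (1 - p) * Al := by nlinarith
  have hc : 0 < c := lt_of_lt_of_le (by positivity) hc_lb
  set s := Real.sqrt (c * φ / 2) with hs
  set a := Real.sqrt (p * Ah + (1 - p) * Al) with ha
  set b := Real.sqrt ((1 - p) * Al) with hb
  set l := Real.sqrt Al with hl
  set q := Real.sqrt (1 - p) with hq
  have hs0 : 0 ≤ s := Real.sqrt_nonneg _
  have ha0 : 0 ≤ a := Real.sqrt_nonneg _
  have hb0 : 0 ≤ b := Real.sqrt_nonneg _
  have hl0 : 0 ≤ l := Real.sqrt_nonneg _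
  have hq0 : 0 ≤ q := Real.sqrt_nonneg _
  have hs2 : s ^ 2 = c * φ / 2 := Real.sq_sqrt (by positivity)
  have ha2 : a ^ 2 = p * Ah + (1 - p) * Al := Real.sq_sqrt hA.le
  have hb2 : b ^ 2 = (1 - p) * Al := Real.sq_sqrt (by nlinarith)
  have hl2 : l ^ 2 = Al := Real.sq_sqrt hAl.le
  have hq2 : q ^ 2 = 1 - p := Real.sq_sqrt (by linarith)
  have hbql : b = q * l := by
    rw [hb, hq, hl, ← Real.sqrt_mul (by linarith)]
  have hspos : 0 < s := Real.sqrt_pos.mpr (by positivity)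
  -- rewrite the goal
  have e1 : Real.sqrt (c * φ * (p * Ah + (1 - p) * Al) / 2) = s * a := by
    rw [show c * φ * (p * Ah + (1 - p) * Al) / 2 = (c * φ / 2) * (p * Ah + (1 - p) * Al) by ring,
      Real.sqrt_mul (by positivity)]
  have e2 : Real.sqrt (c * φ * Al / 2) = s * l := by
    rw [show c * φ * Al / 2 = (c * φ / 2) * Al by ring, Real.sqrt_mul (by positivity)]
  rw [e1, e2]
  -- key inequality 1 : s * a < φ / 2
  have h1 : s * a < φ / 2 := by
    have hcA : c * (2 * (p * Ah + (1 - p) * Al)) < φ := (lt_div_iff₀ (by positivity)).mp hc1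
    have : (s * a) ^ 2 < (φ / 2) ^ 2 := by
      rw [mul_pow, hs2, ha2]; nlinarith
    exact lt_of_pow_lt_pow_left₀ 2 (by positivity) this
  -- key inequality 2 : s * Ah < (φ/2) * (b + a)
  have h2 : s * Ah < (φ / 2) * (b + a) := by
    have hcA : c * (2 * Ah ^ 2) < φ * (b + a) ^ 2 := by
      have h := hc2
      rw [div_mul_eq_mul_div, lt_div_iff₀ (by positivity)] at h
      linarith
    have : (s * Ah) ^ 2 < ((φ / 2) * (b + a)) ^ 2 := by
      rw [mul_pow, mul_pow, hs2]
      have h4 := mul_lt_mul_of_pos_left hcA (show (0:ℝ) < φ / 4 by positivity)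
      linarith
    exact lt_of_pow_lt_pow_left₀ 2 (by positivity) this
  -- h3 : s*a - s*b < p*φ/2
  have hab : 0 < a + b := by
    have : 0 < a := Real.sqrt_pos.mpr hA
    linarith
  have h3 : s * a - s * b < p * φ / 2 := by
    have hm : p * (s * Ah) < p * ((φ / 2) * (b + a)) := by
      exact mul_lt_mul_of_pos_left h2 hp0
    have key : (s * a - s * b) * (a + b) < (p * φ / 2) * (a + b) := by
      have : (s * a - s * b) * (a + b) = s * (a ^ 2 - b ^ 2) := by ring
      rw [this, ha2, hb2]
      linarith
    exact (mul_lt_mul_iff_of_pos_right hab).mp key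
  -- h4 : s*b - (1-p)*(s*l) < p*φ/2
  have h4 : s * b - (1 - p) * (s * l) < p * φ / 2 := by
    have hq1 : q < 1 := by
      have h : q ^ 2 < 1 ^ 2 := by rw [hq2]; nlinarith
      exact lt_of_pow_lt_pow_left₀ 2 zero_le_one h
    have hqp : 1 - p ≤ q := by
      have h : (1 - p) ^ 2 ≤ q ^ 2 := by rw [hq2]; nlinarith
      exact le_of_pow_le_pow_left₀ (by norm_num) hq0 h
    have hba : b ≤ a := by
      have h : b ^ 2 ≤ a ^ 2 := by rw [ha2, hb2]; nlinarith
      exact le_of_pow_le_pow_left₀ (by norm_num) ha0 h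
    have hsb : s * b < φ / 2 :=
      lt_of_le_of_lt (mul_le_mul_of_nonneg_left hba hs0) h1
    have hrw : s * b - (1 - p) * (s * l) = (s * b) * (1 - q) := by
      rw [hbql, ← hq2]; ring
    rw [hrw]
    have h1q : 0 < 1 - q := by linarith
    calc (s * b) * (1 - q) < (φ / 2) * (1 - q) :=
          mul_lt_mul_of_pos_right hsb h1q
      _ ≤ (φ / 2) * p := mul_le_mul_of_nonneg_left (by linarith) (by positivity)
      _ = p * φ / 2 := by ring
  linarith
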